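/- Let ε, μ : ℝ → ℝ with 0 < ε₀ ≤ ε ≤ ε₁, 0 < μ₀ ≤ μ ≤ μ₁, both in W^2_{1,loc}(ℝ), with sup_s ∫_s^{s+1}(|ε''| + |μ''|) < ∞. Define y(z) = ∫_0^z √(ε(s)μ(s)) ds and ε̃(y(z)) = ε(z), μ̃(y(z)) = μ(z). Then y : ℝ → ℝ is a strictly increasing bijection, ε̃, μ̃ ∈ W^2_{1,loc}(ℝ), ε₀ ≤ ε̃ ≤ ε₁, μ₀ ≤ μ̃ ≤ μ₁, and sup_t ∫_t^{t+1}(|ε̃''| + |μ̃''|) dy < ∞. -/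

import Mathlib

open MeasureTheory Set

lemma aux_intervalInt {f : ℝ → ℝ} (hf : LocallyIntegrable f volume) (a b : ℝ) :
    IntervalIntegrable f volume a b :=
  (hf.integrableOn_isCompact isCompact_uIcc).intervalIntegrable

lemma aux_nstep (h : ℝ → ℝ) (S : ℝ)
    (hint : ∀ a b : ℝ, IntervalIntegrable h volume a b)
    (hS : ∀ s : ℝ, (∫ t in s..(s + 1), h t) ≤ S) :
    ∀ (n : ℕ) (a : ℝ), (∫ t in a..(a + n), h t) ≤ n * S := by
  intro n
  induction n with
  | zero => intro a; simp
  | succ n ih =>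
    intro a
    have h1 : a + ((n : ℝ) + 1) = (a + n) + 1 := by ring
    push_cast
    rw [h1, ← intervalIntegral.integral_add_adjacent_intervals (hint a (a + n))
      (hint (a + n) (a + n + 1))]
    linarith [ih a, hS (a + (n : ℝ))]

lemma aux_deriv_bound (f f' f'' : ℝ → ℝ) (f₀ f₁ S : ℝ)
    (hb : ∀ z, f₀ ≤ f z ∧ f z ≤ f₁)
    (hd : ∀ z, HasDerivAt f (f' z) z)
    (hd' : ∀ z, HasDerivAt f' (f'' z) z)
    (hint : ∀ a b : ℝ, IntervalIntegrable f'' volume a b)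
    (habs : ∀ s : ℝ, (∫ t in s..(s + 1), |f'' t|) ≤ S) :
    ∀ z, |f' z| ≤ (f₁ - f₀) + S := by
  intro z
  have hf'c : Continuous f' :=
    continuous_iff_continuousAt.mpr fun x => (hd' x).continuousAt
  have habs' : ∀ a b : ℝ, IntervalIntegrable (fun t => |f'' t|) volume a b :=
    fun a b => (hint a b).abs
  have key : ∀ t ∈ Set.uIoc z (z + 1), ‖f' t - f' z‖ ≤ S := by
    intro t ht
    rw [Set.uIoc_of_le (by linarith : z ≤ z + 1)] at ht
    obtain ⟨ht1, ht2⟩ := ht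
    have e1 : ∫ s in z..t, f'' s = f' t - f' z :=
      intervalIntegral.integral_eq_sub_of_hasDerivAt (fun s _ => hd' s) (hint z t)
    rw [Real.norm_eq_abs, ← e1]
    calc |∫ s in z..t, f'' s| ≤ ∫ s in z..t, |f'' s| :=
          intervalIntegral.abs_integral_le_integral_abs ht1.le
      _ ≤ ∫ s in z..(z + 1), |f'' s| :=
          intervalIntegral.integral_mono_interval le_rfl ht1.le ht2
            (Filter.Eventually.of_forall fun s => abs_nonneg _) (habs' z (z + 1))
      _ ≤ S := habs z
  have e2 : ∫ t in z..(z + 1), f' t = f (z + 1) - f z :=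
    intervalIntegral.integral_eq_sub_of_hasDerivAt (fun s _ => hd s)
      (hf'c.intervalIntegrable _ _)
  have e3 : (∫ t in z..(z + 1), (f' t - f' z)) = (f (z + 1) - f z) - f' z := by
    rw [intervalIntegral.integral_sub (hf'c.intervalIntegrable _ _) intervalIntegrable_const,
      e2, intervalIntegral.integral_const]
    simp
  have e4 := intervalIntegral.norm_integral_le_of_norm_le_const key
  rw [e3, Real.norm_eq_abs] at e4
  have h9 : |z + 1 - z| = 1 := by norm_num
  rw [h9, mul_one] at e4
  have hb1 := hb z; have hb2 := hb (z + 1)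
  rw [abs_le] at e4 ⊢
  constructor <;> [linarith [e4.2]; linarith [e4.1]]

/-- Let `0 < ε₀ ≤ ε ≤ ε₁`, `0 < μ₀ ≤ μ ≤ μ₁`, both of class
`W²_{1,loc}(ℝ)` (modelled by classical derivatives `ε', ε''` with `ε''` locally
integrable), with `sup_s ∫_s^{s+1}(|ε''| + |μ''|) ≤ S`.  Define
`y(z) = ∫_0^z √(ε μ)` and `ε̃(y(z)) = ε(z)`, `μ̃(y(z)) = μ(z)`.  Then `y` is a
strictly increasing bijection of `ℝ`, and `ε̃, μ̃` satisfy the same bounds, are of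
class `W²_{1,loc}`, and have uniformly locally integrable second derivatives. -/
theorem liouville_change_of_variables
    (ε μ ε' μ' ε'' μ'' : ℝ → ℝ) (ε₀ ε₁ μ₀ μ₁ S : ℝ)
    (hε₀ : 0 < ε₀) (hμ₀ : 0 < μ₀)
    (hεb : ∀ z, ε₀ ≤ ε z ∧ ε z ≤ ε₁) (hμb : ∀ z, μ₀ ≤ μ z ∧ μ z ≤ μ₁)
    (hdε : ∀ z, HasDerivAt ε (ε' z) z) (hdε' : ∀ z, HasDerivAt ε' (ε'' z) z)
    (hdμ : ∀ z, HasDerivAt μ (μ' z) z) (hdμ' : ∀ z, HasDerivAt μ' (μ'' z) z)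
    (hlocε : LocallyIntegrable ε'' volume) (hlocμ : LocallyIntegrable μ'' volume)
    (hS : ∀ s : ℝ, (∫ t in s..(s + 1), (|ε'' t| + |μ'' t|)) ≤ S)
    (y : ℝ → ℝ)
    (hy : ∀ z, y z = ∫ t in (0:ℝ)..z, Real.sqrt (ε t * μ t)) :
    StrictMono y ∧ Function.Bijective y ∧
    ∃ εt μt εt' μt' εt'' μt'' : ℝ → ℝ,
      (∀ z, εt (y z) = ε z) ∧ (∀ z, μt (y z) = μ z) ∧
      (∀ w, ε₀ ≤ εt w ∧ εt w ≤ ε₁) ∧ (∀ w, μ₀ ≤ μt w ∧ μt w ≤ μ₁) ∧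
      (∀ w, HasDerivAt εt (εt' w) w) ∧ (∀ w, HasDerivAt εt' (εt'' w) w) ∧
      (∀ w, HasDerivAt μt (μt' w) w) ∧ (∀ w, HasDerivAt μt' (μt'' w) w) ∧
      LocallyIntegrable εt'' volume ∧ LocallyIntegrable μt'' volume ∧
      ∃ S' : ℝ, ∀ t : ℝ, (∫ w in t..(t + 1), (|εt'' w| + |μt'' w|)) ≤ S' := by
  have hεc : Continuous ε := continuous_iff_continuousAt.mpr fun x => (hdε x).continuousAt
  have hμc : Continuous μ := continuous_iff_continuousAt.mpr fun x => (hdμ x).continuousAt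
  have hε'c : Continuous ε' := continuous_iff_continuousAt.mpr fun x => (hdε' x).continuousAt
  have hμ'c : Continuous μ' := continuous_iff_continuousAt.mpr fun x => (hdμ' x).continuousAt
  have hεpos : ∀ z, 0 < ε z := fun z => lt_of_lt_of_le hε₀ (hεb z).1
  have hμpos : ∀ z, 0 < μ z := fun z => lt_of_lt_of_le hμ₀ (hμb z).1
  have hε₁ : 0 < ε₁ := lt_of_lt_of_le (hεpos 0) (hεb 0).2
  have hμ₁ : 0 < μ₁ := lt_of_lt_of_le (hμpos 0) (hμb 0).2
  set sq : ℝ → ℝ := fun z => Real.sqrt (ε z * μ z) with hsq_def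
  have hεμpos : ∀ z, 0 < ε z * μ z := fun z => mul_pos (hεpos z) (hμpos z)
  have hsqpos : ∀ z, 0 < sq z := fun z => Real.sqrt_pos.mpr (hεμpos z)
  set c := Real.sqrt (ε₀ * μ₀) with hc_def
  set C := Real.sqrt (ε₁ * μ₁) with hC_def
  have hcpos : 0 < c := Real.sqrt_pos.mpr (mul_pos hε₀ hμ₀)
  have hsq_ge : ∀ z, c ≤ sq z := fun z =>
    Real.sqrt_le_sqrt (mul_le_mul (hεb z).1 (hμb z).1 hμ₀.le (hεpos z).le)
  have hsq_le : ∀ z, sq z ≤ C := fun z =>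
    Real.sqrt_le_sqrt (mul_le_mul (hεb z).2 (hμb z).2 (hμpos z).le hε₁.le)
  have hsqc : Continuous sq := Real.continuous_sqrt.comp (hεc.mul hμc)
  have hyd : ∀ z, HasDerivAt y (sq z) z := by
    have hyfun : y = fun z => ∫ t in (0:ℝ)..z, sq t := funext hy
    intro z; rw [hyfun]
    exact (hsqc.integral_hasStrictDerivAt 0 z).hasDerivAt
  have hydiff : Differentiable ℝ y := fun z => (hyd z).differentiableAt
  have hyc : Continuous y := hydiff.continuous
  have hmono : StrictMono y := strictMono_of_deriv_pos fun x => by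
    rw [(hyd x).deriv]; exact hsqpos x
  have hgrow : ∀ a b : ℝ, a ≤ b → c * (b - a) ≤ y b - y a := by
    intro a b hab
    have hmon : Monotone fun z => y z - c * z := by
      apply monotone_of_deriv_nonneg
      · exact hydiff.sub (differentiable_id.const_mul c)
      · intro x
        have hh : HasDerivAt (fun z => y z - c * z) (sq x - c) x := by
          have h := (hyd x).sub ((hasDerivAt_id' x).const_mul c)
          rw [mul_one] at h; exact h
        rw [hh.deriv]; linarith [hsq_ge x]
    have := hmon hab
    simp only at this
    linarith
  have hsurj : Function.Surjective y := by
    apply hyc.surjective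
    · refine Filter.tendsto_atTop_mono' Filter.atTop ?_
        (Filter.tendsto_atTop_add_const_right _ (y 0)
          (Filter.Tendsto.const_mul_atTop hcpos Filter.tendsto_id))
      filter_upwards [Filter.eventually_ge_atTop (0:ℝ)] with b hb
      have := hgrow 0 b hb
      simp only [id_eq]
      linarith
    · refine Filter.tendsto_atBot_mono' Filter.atBot ?_
        (Filter.tendsto_atBot_add_const_right _ (y 0)
          (Filter.Tendsto.const_mul_atBot hcpos Filter.tendsto_id))
      filter_upwards [Filter.eventually_le_atBot (0:ℝ)] with b hb
      have := hgrow b 0 hb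
      simp only [id_eq]
      linarith
  have hbij : Function.Bijective y := ⟨hmono.injective, hsurj⟩
  clear hy
  set e : ℝ ≃o ℝ := StrictMono.orderIsoOfSurjective y hmono hsurj with he_def
  have hey : ∀ z, e z = y z := fun z =>
    congrFun (StrictMono.coe_orderIsoOfSurjective y hmono hsurj) z
  set g : ℝ → ℝ := fun w => e.symm w with hg_def
  have hgy : ∀ z, g (y z) = z := by
    intro z; rw [hg_def]; simp only [← hey]; exact e.symm_apply_apply z
  have hyg : ∀ w, y (g w) = w := by
    intro w; rw [hg_def]; simp only [← hey]; exact e.apply_symm_apply w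
  have hgc : Continuous g := e.symm.continuous
  have hgd : ∀ w, HasDerivAt g ((sq (g w))⁻¹) w := fun w =>
    HasDerivAt.of_local_left_inverse hgc.continuousAt (hyd (g w))
      (ne_of_gt (hsqpos (g w))) (Filter.Eventually.of_forall hyg)
  have hgmono : Monotone g := fun u v huv => e.symm.monotone huv
  -- derivative of sq
  set sq' : ℝ → ℝ := fun z => (ε' z * μ z + ε z * μ' z) / (2 * sq z) with hsq'_def
  have hsqd : ∀ z, HasDerivAt sq (sq' z) z := by
    intro z
    have h1 : HasDerivAt (fun z => ε z * μ z) (ε' z * μ z + ε z * μ' z) z :=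
      (hdε z).mul (hdμ z)
    have h2 := (Real.hasDerivAt_sqrt (ne_of_gt (hεμpos z))).comp z h1
    have h3 : sq' z = 1 / (2 * Real.sqrt (ε z * μ z)) * (ε' z * μ z + ε z * μ' z) := by
      rw [hsq'_def]
      field_simp
      rw [mul_comm (μ z) (ε z)]
    rw [h3]
    exact h2
  have hsq'c : Continuous sq' := by
    apply Continuous.div ((hε'c.mul hμc).add (hεc.mul hμ'c)) (continuous_const.mul hsqc)
    intro z
    have := hsqpos z
    exact (mul_pos two_pos this).ne'
  set F : ℝ → ℝ := fun z => ε' z * (sq z)⁻¹ with hF_def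
  set F' : ℝ → ℝ := fun z => ε'' z * (sq z)⁻¹ + ε' z * (-sq' z / (sq z) ^ 2) with hF'_def
  have hFd : ∀ z, HasDerivAt F (F' z) z := fun z =>
    (hdε' z).mul ((hsqd z).inv (ne_of_gt (hsqpos z)))
  set G : ℝ → ℝ := fun z => μ' z * (sq z)⁻¹ with hG_def
  set G' : ℝ → ℝ := fun z => μ'' z * (sq z)⁻¹ + μ' z * (-sq' z / (sq z) ^ 2) with hG'_def
  have hGd : ∀ z, HasDerivAt G (G' z) z := fun z =>
    (hdμ' z).mul ((hsqd z).inv (ne_of_gt (hsqpos z)))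
  -- image of intervals under y
  have hye : y = ⇑e := funext fun z => (hey z).symm
  have himg : ∀ u v : ℝ, y '' Icc u v = Icc (y u) (y v) := by
    intro u v; rw [hye]; exact e.image_Icc u v
  have hsqinvc : Continuous fun z => (sq z)⁻¹ :=
    hsqc.inv₀ fun z => ne_of_gt (hsqpos z)
  have hF'II : ∀ a b : ℝ, IntervalIntegrable F' volume a b := by
    intro a b
    exact ((aux_intervalInt hlocε a b).mul_continuousOn hsqinvc.continuousOn).add
      (((hε'c.mul ((hsq'c.neg.div (hsqc.pow 2)
        fun z => ne_of_gt (pow_pos (hsqpos z) 2)))).intervalIntegrable a b))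
  have hG'II : ∀ a b : ℝ, IntervalIntegrable G' volume a b := by
    intro a b
    exact ((aux_intervalInt hlocμ a b).mul_continuousOn hsqinvc.continuousOn).add
      (((hμ'c.mul ((hsq'c.neg.div (hsqc.pow 2)
        fun z => ne_of_gt (pow_pos (hsqpos z) 2)))).intervalIntegrable a b))
  have hF'int : ∀ a b : ℝ, a ≤ b → IntegrableOn F' (Icc a b) volume := fun a b hab =>
    (intervalIntegrable_iff_integrableOn_Icc_of_le hab).mp (hF'II a b)
  have hG'int : ∀ a b : ℝ, a ≤ b → IntegrableOn G' (Icc a b) volume := fun a b hab =>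
    (intervalIntegrable_iff_integrableOn_Icc_of_le hab).mp (hG'II a b)
  -- transported integrability
  have hkey : ∀ (H' : ℝ → ℝ), (∀ a b : ℝ, a ≤ b → IntegrableOn H' (Icc a b) volume) →
      ∀ a b : ℝ, IntegrableOn (fun w => H' (g w) * (sq (g w))⁻¹) (Icc a b) volume := by
    intro H' hH' a b
    rcases le_or_gt a b with hab | hab
    · have himg2 : y '' Icc (g a) (g b) = Icc a b := by rw [himg, hyg, hyg]
      rw [← himg2, integrableOn_image_iff_integrableOn_abs_deriv_smul measurableSet_Icc
        (fun x _ => (hyd x).hasDerivWithinAt) (hmono.injective.injOn)]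
      have heq : (fun z => |sq z| • ((fun w => H' (g w) * (sq (g w))⁻¹) (y z))) = H' := by
        funext z
        simp only [smul_eq_mul, hgy]
        rw [abs_of_pos (hsqpos z)]
        field_simp
        rw [mul_comm, mul_div_assoc, div_self (ne_of_gt (hsqpos z)), mul_one]
      rw [heq]
      exact hH' (g a) (g b) (hgmono hab)
    · rw [Icc_eq_empty (not_le.mpr hab)]; exact integrableOn_empty
  have hloc : ∀ (H' : ℝ → ℝ), (∀ a b : ℝ, a ≤ b → IntegrableOn H' (Icc a b) volume) →
      LocallyIntegrable (fun w => H' (g w) * (sq (g w))⁻¹) volume := by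
    intro H' hH'
    refine locallyIntegrable_iff.mpr fun K hK => ?_
    obtain ⟨a, b, hab⟩ := bddBelow_bddAbove_iff_subset_Icc.mp ⟨hK.bddBelow, hK.bddAbove⟩
    exact (hkey H' hH' a b).mono_set hab
  -- constants
  have hintabs : ∀ a b : ℝ, IntervalIntegrable (fun t => |ε'' t| + |μ'' t|) volume a b :=
    fun a b => ((aux_intervalInt hlocε a b).abs).add ((aux_intervalInt hlocμ a b).abs)
  have hSnn : 0 ≤ S :=
    le_trans (intervalIntegral.integral_nonneg (by linarith) fun t _ => by positivity) (hS 0)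
  have habsε : ∀ s : ℝ, (∫ t in s..(s + 1), |ε'' t|) ≤ S := by
    intro s
    refine le_trans (intervalIntegral.integral_mono_on (by linarith)
      (aux_intervalInt hlocε s (s + 1)).abs (hintabs s (s + 1)) ?_) (hS s)
    intro x _
    have := abs_nonneg (μ'' x); linarith
  have habsμ : ∀ s : ℝ, (∫ t in s..(s + 1), |μ'' t|) ≤ S := by
    intro s
    refine le_trans (intervalIntegral.integral_mono_on (by linarith)
      (aux_intervalInt hlocμ s (s + 1)).abs (hintabs s (s + 1)) ?_) (hS s)
    intro x _
    have := abs_nonneg (ε'' x); linarith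
  set B := (ε₁ - ε₀) + S with hB_def
  set Bμ := (μ₁ - μ₀) + S with hBμ_def
  have hB : ∀ z, |ε' z| ≤ B :=
    aux_deriv_bound ε ε' ε'' ε₀ ε₁ S hεb hdε hdε' (aux_intervalInt hlocε) habsε
  have hBμ : ∀ z, |μ' z| ≤ Bμ :=
    aux_deriv_bound μ μ' μ'' μ₀ μ₁ S hμb hdμ hdμ' (aux_intervalInt hlocμ) habsμ
  have hBnn : 0 ≤ B := le_trans (abs_nonneg _) (hB 0)
  have hBμnn : 0 ≤ Bμ := le_trans (abs_nonneg _) (hBμ 0)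
  set D := (B * μ₁ + ε₁ * Bμ) / (2 * c) with hD_def
  have hnumnn : 0 ≤ B * μ₁ + ε₁ * Bμ :=
    add_nonneg (mul_nonneg hBnn hμ₁.le) (mul_nonneg hε₁.le hBμnn)
  have hD : ∀ z, |sq' z| ≤ D := by
    intro z
    have hnum : |ε' z * μ z + ε z * μ' z| ≤ B * μ₁ + ε₁ * Bμ := by
      calc |ε' z * μ z + ε z * μ' z| ≤ |ε' z * μ z| + |ε z * μ' z| := abs_add_le _ _
        _ = |ε' z| * μ z + ε z * |μ' z| := by
            rw [abs_mul, abs_mul, abs_of_pos (hμpos z), abs_of_pos (hεpos z)]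
        _ ≤ B * μ₁ + ε₁ * Bμ := by
            have h1 := hB z; have h2 := hBμ z
            have h3 := (hμb z); have h4 := (hεb z)
            have h5 := abs_nonneg (ε' z); have h6 := abs_nonneg (μ' z)
            have h7 := hμpos z; have h8 := hεpos z
            nlinarith
    rw [hsq'_def]
    simp only
    rw [abs_div, abs_of_pos (by linarith [hsqpos z] : (0:ℝ) < 2 * sq z)]
    exact div_le_div₀ hnumnn hnum (by positivity) (by linarith [hsq_ge z])
  have hDnn : 0 ≤ D := le_trans (abs_nonneg _) (hD 0)
  set K := B * D / c ^ 2 + Bμ * D / c ^ 2 with hK_def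
  have hKnn : 0 ≤ K :=
    add_nonneg (div_nonneg (mul_nonneg hBnn hDnn) (by positivity))
      (div_nonneg (mul_nonneg hBμnn hDnn) (by positivity))
  have hbound : ∀ (p q : ℝ → ℝ) (Bp : ℝ), 0 ≤ Bp → (∀ z, |p z| ≤ Bp) →
      ∀ z, |q z * (sq z)⁻¹ + p z * (-sq' z / sq z ^ 2)| ≤ |q z| * c⁻¹ + Bp * D / c ^ 2 := by
    intro p q Bp hBp hp z
    have t1 : |q z * (sq z)⁻¹| = |q z| * (sq z)⁻¹ := by
      rw [abs_mul, abs_of_pos (inv_pos.mpr (hsqpos z))]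
    have t2 : |p z * (-sq' z / sq z ^ 2)| = |p z| * (|sq' z| / sq z ^ 2) := by
      rw [abs_mul, abs_div, abs_neg, abs_of_pos (pow_pos (hsqpos z) 2)]
    have t3 : (sq z)⁻¹ ≤ c⁻¹ := inv_anti₀ hcpos (hsq_ge z)
    have t4 : |sq' z| / sq z ^ 2 ≤ D / c ^ 2 :=
      div_le_div₀ hDnn (hD z) (pow_pos hcpos 2) (pow_le_pow_left₀ hcpos.le (hsq_ge z) 2)
    calc |q z * (sq z)⁻¹ + p z * (-sq' z / sq z ^ 2)|
        ≤ |q z * (sq z)⁻¹| + |p z * (-sq' z / sq z ^ 2)| := abs_add_le _ _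
      _ = |q z| * (sq z)⁻¹ + |p z| * (|sq' z| / sq z ^ 2) := by rw [t1, t2]
      _ ≤ |q z| * c⁻¹ + Bp * (D / c ^ 2) :=
          add_le_add (mul_le_mul_of_nonneg_left t3 (abs_nonneg _))
            (mul_le_mul (hp z) t4 (by positivity) hBp)
      _ = |q z| * c⁻¹ + Bp * D / c ^ 2 := by ring
  refine ⟨hmono, hbij, fun w => ε (g w), fun w => μ (g w), fun w => F (g w), fun w => G (g w),
    fun w => F' (g w) * (sq (g w))⁻¹, fun w => G' (g w) * (sq (g w))⁻¹,
    ?_, ?_, ?_, ?_, ?_, ?_, ?_, ?_, ?_, ?_, ?_⟩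
  · intro z; show ε (g (y z)) = ε z; rw [hgy]
  · intro z; show μ (g (y z)) = μ z; rw [hgy]
  · intro w; exact hεb (g w)
  · intro w; exact hμb (g w)
  · intro w; exact (hdε (g w)).comp w (hgd w)
  · intro w; exact (hFd (g w)).comp w (hgd w)
  · intro w; exact (hdμ (g w)).comp w (hgd w)
  · intro w; exact (hGd (g w)).comp w (hgd w)
  · exact hloc F' hF'int
  · exact hloc G' hG'int
  · -- uniform bound
    set n : ℕ := ⌈(1:ℝ)/c⌉₊ with hn_def
    have hn : 1/c ≤ (n:ℝ) := Nat.le_ceil _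
    have hnnn : (0:ℝ) ≤ (n:ℝ) := Nat.cast_nonneg n
    refine ⟨((n:ℝ) * S) * c⁻¹ + K * (1/c), ?_⟩
    intro t
    have huv : g t ≤ g (t + 1) := hgmono (by linarith)
    have hvu : g (t + 1) - g t ≤ 1/c := by
      have h := hgrow (g t) (g (t + 1)) huv
      rw [hyg, hyg] at h
      rw [le_div_iff₀ hcpos]
      linarith
    have himg2 : y '' Icc (g t) (g (t + 1)) = Icc t (t + 1) := by
      rw [himg, hyg, hyg]
    have hintabsK : IntegrableOn (fun z => |ε'' z| + |μ'' z|) (Icc (g t) (g (t+1))) volume :=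
      ((hlocε.integrableOn_isCompact isCompact_Icc).abs).add
        ((hlocμ.integrableOn_isCompact isCompact_Icc).abs)
    calc (∫ w in t..(t + 1),
            (|F' (g w) * (sq (g w))⁻¹| + |G' (g w) * (sq (g w))⁻¹|))
        = ∫ w in Icc t (t + 1),
            (|F' (g w) * (sq (g w))⁻¹| + |G' (g w) * (sq (g w))⁻¹|) := by
          rw [intervalIntegral.integral_of_le (by linarith), ← integral_Icc_eq_integral_Ioc]
      _ = ∫ z in Icc (g t) (g (t + 1)), (|F' z| + |G' z|) := by
          rw [← himg2, integral_image_eq_integral_abs_deriv_smul measurableSet_Icc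
            (fun x _ => (hyd x).hasDerivWithinAt) hmono.injective.injOn]
          have hpt : ∀ z, |sq z| •
              (|F' (g (y z)) * (sq (g (y z)))⁻¹| + |G' (g (y z)) * (sq (g (y z)))⁻¹|)
              = |F' z| + |G' z| := by
            intro z
            rw [hgy, smul_eq_mul, abs_mul, abs_mul,
              abs_of_pos (inv_pos.mpr (hsqpos z)), abs_of_pos (hsqpos z), mul_add,
              mul_comm (sq z) (|F' z| * (sq z)⁻¹), mul_assoc,
              inv_mul_cancel₀ (ne_of_gt (hsqpos z)), mul_one,
              mul_comm (sq z) (|G' z| * (sq z)⁻¹), mul_assoc,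
              inv_mul_cancel₀ (ne_of_gt (hsqpos z)), mul_one]
          simp only [hpt]
      _ ≤ ∫ z in Icc (g t) (g (t + 1)), ((|ε'' z| + |μ'' z|) * c⁻¹ + K) := by
          apply setIntegral_mono_on
          · exact ((hF'int _ _ huv).abs.add ((hG'int _ _ huv).abs))
          · exact (hintabsK.mul_const _).add
              (integrableOn_const measure_Icc_lt_top.ne)
          · exact measurableSet_Icc
          · intro x _
            have hFx := hbound ε' ε'' B hBnn hB x
            have hGx := hbound μ' μ'' Bμ hBμnn hBμ x
            rw [hK_def, add_mul]
            simp only [hF'_def, hG'_def] at hFx hGx ⊢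
            linarith
      _ = (∫ z in Icc (g t) (g (t + 1)), (|ε'' z| + |μ'' z|)) * c⁻¹
            + K * (g (t + 1) - g t) := by
          rw [integral_add (hintabsK.mul_const _)
            (integrableOn_const measure_Icc_lt_top.ne),
            integral_mul_const, setIntegral_const, smul_eq_mul, Real.volume_real_Icc,
            max_eq_left (by linarith)]
          ring
      _ ≤ ((n:ℝ) * S) * c⁻¹ + K * (1/c) := by
          have h5 : (∫ z in Icc (g t) (g (t + 1)), (|ε'' z| + |μ'' z|)) ≤ (n:ℝ) * S := by
            calc (∫ z in Icc (g t) (g (t + 1)), (|ε'' z| + |μ'' z|))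
                ≤ ∫ z in Icc (g t) (g t + (n:ℝ)), (|ε'' z| + |μ'' z|) := by
                  apply setIntegral_mono_set
                  · exact (intervalIntegrable_iff_integrableOn_Icc_of_le
                      (by linarith)).mp (hintabs (g t) (g t + (n:ℝ)))
                  · filter_upwards with x
                    positivity
                  · exact HasSubset.Subset.eventuallyLE
                      (Icc_subset_Icc le_rfl (by linarith [hcpos]))
                _ = ∫ z in (g t)..(g t + (n:ℝ)), (|ε'' z| + |μ'' z|) := by
                  rw [intervalIntegral.integral_of_le (by linarith),
                    ← integral_Icc_eq_integral_Ioc]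
                _ ≤ (n:ℝ) * S := aux_nstep _ S hintabs hS n (g t)
          have h6 := mul_le_mul_of_nonneg_right h5 (inv_nonneg.mpr hcpos.le)
          have h7 := mul_le_mul_of_nonneg_left hvu hKnn
          linarith
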